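/- arXiv:2510.25442 — 4 statements merged into one kernel-verified Lean document; each statement's English description precedes it below -/
import Mathlib

section
/- Let N ∈ ℕ and let f : 𝕋 → [0,∞) be continuous with pointwise cosine expansion f(t) = Σ_{m=0}^∞ a_m cos(2πmt), where a_m ≥ 0 for all m > 0 and a_m = 0 for all m > 0 divisible by N. Then for all points x^0, x^1, …, x^{N−1} ∈ [0,1) one has E_f(x^0,…,x^{N−1}) ≥ E_f(0/N, 1/N, …, (N−1)/N). -/
open Finset Real

/-- Pairwise interaction energy of `N` points on the circle `𝕋 = ℝ/ℤ ≃ [0,1)`: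
`E_f(x^0,…,x^{N-1}) = Σ_{k ≠ ℓ} f(x^k − x^ℓ)`. -/
noncomputable def energy1 {N : ℕ} (f : ℝ → ℝ) (x : Fin N → ℝ) : ℝ :=
  ∑ k : Fin N, ∑ ℓ : Fin N, if k = ℓ then 0 else f (x k - x ℓ)

-- double cosine sum as sum of two squares
lemma sum_cos_sub {N : ℕ} (c : ℝ) (y : Fin N → ℝ) :
    ∑ k : Fin N, ∑ ℓ : Fin N, Real.cos (c * (y k - y ℓ))
      = (∑ k : Fin N, Real.cos (c * y k))^2 + (∑ k : Fin N, Real.sin (c * y k))^2 := by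
  rw [sq, sq, Finset.sum_mul_sum, Finset.sum_mul_sum, ← Finset.sum_add_distrib]
  refine Finset.sum_congr rfl fun k _ => ?_
  rw [← Finset.sum_add_distrib]
  refine Finset.sum_congr rfl fun ℓ _ => ?_
  rw [mul_sub, Real.cos_sub]

lemma exp_sum_eq_zero (N m : ℕ) (hm : ¬ N ∣ m) :
    ∑ k : Fin N, Complex.exp ((2 * π * m * ((k : ℕ) / N : ℝ) : ℝ) * Complex.I) = 0 := by
  rcases Nat.eq_zero_or_pos N with hN | hN
  · subst hN; simp
  have hN0 : (N : ℝ) ≠ 0 := Nat.cast_ne_zero.mpr hN.ne'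
  set z : ℂ := Complex.exp ((2 * π * m / N : ℝ) * Complex.I) with hz
  have hzk : ∀ k : ℕ, Complex.exp ((2 * π * m * ((k : ℕ) / N : ℝ) : ℝ) * Complex.I) = z ^ k := by
    intro k
    rw [hz, ← Complex.exp_nat_mul]
    congr 1
    push_cast
    field_simp
  have hNc : (N : ℂ) ≠ 0 := Nat.cast_ne_zero.mpr hN.ne'
  have hzN : z ^ N = 1 := by
    rw [hz, ← Complex.exp_nat_mul]
    have : (N : ℂ) * ((2 * π * m / N : ℝ) * Complex.I) = (m : ℤ) * (2 * π * Complex.I) := by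
      push_cast
      field_simp
    rw [this, Complex.exp_int_mul_two_pi_mul_I]
  have hz1 : z ≠ 1 := by
    intro h
    rw [hz, Complex.exp_eq_one_iff] at h
    obtain ⟨n, hn⟩ := h
    have hI : ((2 * π * m / N : ℝ) : ℂ) = ((n * (2 * π) : ℝ) : ℂ) := by
      have : (n : ℂ) * (2 * ↑π * Complex.I) = ((n * (2 * π) : ℝ) : ℂ) * Complex.I := by
        push_cast; ring
      rw [this] at hn
      exact mul_right_cancel₀ Complex.I_ne_zero hn
    have hR : 2 * π * m / N = n * (2 * π) := Complex.ofReal_inj.mp hI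
    have hπ : (2 * π) ≠ 0 := by positivity
    have hmn : (m : ℝ) = n * N := by
      field_simp at hR
      have h2 : (2 * π) * (m : ℝ) = (2 * π) * ((n : ℝ) * N) := by linear_combination (2 * π) * hR
      exact mul_left_cancel₀ hπ h2
    have hmz : (m : ℤ) = n * N := by exact_mod_cast hmn
    exact hm (Int.natCast_dvd_natCast.mp ⟨n, by linear_combination hmz⟩)
  calc ∑ k : Fin N, Complex.exp ((2 * π * m * ((k : ℕ) / N : ℝ) : ℝ) * Complex.I)
      = ∑ k ∈ Finset.range N, z ^ k := by
        rw [← Fin.sum_univ_eq_sum_range]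
        exact Finset.sum_congr rfl fun k _ => hzk k
    _ = (z ^ N - 1) / (z - 1) := geom_sum_eq hz1 N
    _ = 0 := by rw [hzN]; simp

lemma cos_sum_eq_zero (N m : ℕ) (hm : ¬ N ∣ m) :
    ∑ k : Fin N, Real.cos (2 * π * m * ((k : ℕ) / N : ℝ)) = 0 := by
  have h := congrArg Complex.re (exp_sum_eq_zero N m hm)
  rw [Complex.re_sum] at h
  simp only [Complex.exp_ofReal_mul_I_re] at h
  simpa using h

lemma sin_sum_eq_zero (N m : ℕ) (hm : ¬ N ∣ m) :
    ∑ k : Fin N, Real.sin (2 * π * m * ((k : ℕ) / N : ℝ)) = 0 := by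
  have h := congrArg Complex.im (exp_sum_eq_zero N m hm)
  rw [Complex.im_sum] at h
  simp only [Complex.exp_ofReal_mul_I_im] at h
  simpa using h

/-- If `f : 𝕋 → ℝ` is continuous with pointwise cosine expansion
`f(t) = Σ_{m≥0} a_m cos(2πmt)` where `a_m ≥ 0` for all `m > 0` and `a_m = 0`
for all `m > 0` divisible by `N`, then the `N` equispaced points minimize the
energy `E_f` on the circle. -/
theorem equispaced_minimize_of_nonneg_coefficients (N : ℕ) (f : ℝ → ℝ) (a : ℕ → ℝ)
    (hf_cont : Continuous f)
    (hf_per : Function.Periodic f 1)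
    (hf_sum : ∀ t : ℝ, HasSum (fun m : ℕ => a m * Real.cos (2 * π * (m : ℝ) * t)) (f t))
    (ha_nonneg : ∀ m : ℕ, 0 < m → 0 ≤ a m)
    (ha_zero : ∀ m : ℕ, 0 < m → N ∣ m → a m = 0)
    (x : Fin N → ℝ) (hx : ∀ k, x k ∈ Set.Ico (0 : ℝ) 1) :
    energy1 f x ≥ energy1 f (fun k : Fin N => ((k : ℕ) : ℝ) / N) := by
  set e : Fin N → ℝ := fun k : Fin N => ((k : ℕ) : ℝ) / N with he
  -- C y m : off-diagonal cosine double sum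
  set C : (Fin N → ℝ) → ℕ → ℝ := fun y m =>
    ∑ k : Fin N, ∑ ℓ : Fin N, if k = ℓ then 0 else Real.cos (2 * π * m * (y k - y ℓ)) with hC
  have hE : ∀ y : Fin N → ℝ, HasSum (fun m : ℕ => a m * C y m) (energy1 f y) := by
    intro y
    have h1 : HasSum (fun m : ℕ => ∑ k : Fin N, ∑ ℓ : Fin N,
        (if k = ℓ then (0:ℝ) else a m * Real.cos (2 * π * m * (y k - y ℓ)))) (energy1 f y) := by
      unfold energy1
      refine hasSum_sum fun k _ => hasSum_sum fun ℓ _ => ?_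
      by_cases h : k = ℓ
      · simpa [h] using hasSum_zero
      · simpa [h] using hf_sum (y k - y ℓ)
    convert h1 using 1
    funext m
    rw [hC]
    simp only [Finset.mul_sum, mul_ite, mul_zero]
  have key : ∀ m : ℕ, 0 ≤ a m * C x m - a m * C e m := by
    intro m
    rcases Nat.eq_zero_or_pos m with hm0 | hm0
    · subst hm0
      have : C x 0 = C e 0 := by
        simp [hC]
      rw [this]; simp
    by_cases hNm : N ∣ m
    · rw [ha_zero m hm0 hNm]; simp
    · -- C y m = Q y m - N  with Q the full double sum
      have hQ : ∀ y : Fin N → ℝ, C y m =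
          (∑ k : Fin N, ∑ ℓ : Fin N, Real.cos (2 * π * m * (y k - y ℓ))) - N := by
        intro y
        rw [hC]
        simp only
        have : ∀ k : Fin N, ∑ ℓ : Fin N, (if k = ℓ then (0:ℝ) else Real.cos (2 * π * m * (y k - y ℓ)))
            = (∑ ℓ : Fin N, Real.cos (2 * π * m * (y k - y ℓ))) - 1 := by
          intro k
          have h2 : ∑ ℓ : Fin N, (if k = ℓ then Real.cos (2 * π * m * (y k - y ℓ)) else 0)
              = Real.cos (2 * π * m * (y k - y k)) := by
            simp
          calc ∑ ℓ : Fin N, (if k = ℓ then (0:ℝ) else Real.cos (2 * π * m * (y k - y ℓ)))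
              = ∑ ℓ : Fin N, (Real.cos (2 * π * m * (y k - y ℓ))
                  - if k = ℓ then Real.cos (2 * π * m * (y k - y ℓ)) else 0) := by
                refine Finset.sum_congr rfl fun ℓ _ => ?_
                by_cases h : k = ℓ <;> simp [h]
            _ = (∑ ℓ : Fin N, Real.cos (2 * π * m * (y k - y ℓ))) - 1 := by
                rw [Finset.sum_sub_distrib, h2]
                simp
        rw [Finset.sum_congr rfl fun k _ => this k, Finset.sum_sub_distrib]
        simp [Finset.card_univ]
    -- difference
      have hce : C x m - C e m = (∑ k : Fin N, ∑ ℓ : Fin N, Real.cos (2 * π * m * (x k - x ℓ)))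
          - (∑ k : Fin N, ∑ ℓ : Fin N, Real.cos (2 * π * m * (e k - e ℓ))) := by
        rw [hQ x, hQ e]; ring
      have hQx : 0 ≤ ∑ k : Fin N, ∑ ℓ : Fin N, Real.cos (2 * π * m * (x k - x ℓ)) := by
        rw [sum_cos_sub]
        positivity
      have hQe : ∑ k : Fin N, ∑ ℓ : Fin N, Real.cos (2 * π * m * (e k - e ℓ)) = 0 := by
        rw [sum_cos_sub, cos_sum_eq_zero N m hNm, sin_sum_eq_zero N m hNm]
        norm_num
      have : 0 ≤ C x m - C e m := by rw [hce, hQe]; linarith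
      have ha := ha_nonneg m hm0
      nlinarith
  have hsub : HasSum (fun m : ℕ => a m * C x m - a m * C e m)
      (energy1 f x - energy1 f e) := (hE x).sub (hE e)
  have h0 : (0:ℝ) ≤ energy1 f x - energy1 f e :=
    hasSum_le (fun m => key m) hasSum_zero hsub
  linarith
end

section
/- Let X ⊆ 𝕋^d be a Latin hypercube set with N points having a single distance vector, and let (ρ_1,…,ρ_d) be its common distance vector. Then for every integer r with 1 ≤ r ≤ ⌊N/2⌋, the number of indices i ∈ {1,…,d} with ρ_i = r/N equals 2d/(N−1) if r < N/2, and equals d/(N−1) if r = N/2. -/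
open Finset Real

open scoped Classical

/-- Geodesic distance on the torus `𝕋 = ℝ/ℤ ≃ [0,1)`:
`δ(x,y) = min{|x−y|, 1−|x−y|}`. -/
noncomputable def torusDist (x y : ℝ) : ℝ := min |x - y| (1 - |x - y|)

/-- The distance vector of two points of `𝕋^d`, as the (unordered) multiset of
coordinatewise geodesic distances; this encodes the vector
`(δ(x_i, y_i))_{i=1}^d` sorted in increasing order. -/
noncomputable def distVec {d : ℕ} (x y : Fin d → ℝ) : Multiset ℝ :=
  Multiset.map (fun i => torusDist (x i) (y i)) Finset.univ.val

lemma nat_dist_def (a b : ℕ) : Nat.dist a b = a - b + (b - a) := rfl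

lemma card_dist_filter (N r : ℕ) (hr : 1 ≤ r) (h2 : 2 * r ≤ N) (a : Fin N) :
    (Finset.univ.filter (fun b : Fin N =>
      min (Nat.dist a.val b.val) (N - Nat.dist a.val b.val) = r)).card
      = if 2 * r < N then 2 else 1 := by
  have hN : 0 < N := by omega
  have ha := a.isLt
  set v1 := if a.val + r < N then a.val + r else a.val + r - N with hv1
  set v2 := if r ≤ a.val then a.val - r else a.val + N - r with hv2
  have hv1lt : v1 < N := by rw [hv1]; split <;> omega
  have hv2lt : v2 < N := by rw [hv2]; split <;> omega
  have hset : (Finset.univ.filter (fun b : Fin N =>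
      min (Nat.dist a.val b.val) (N - Nat.dist a.val b.val) = r))
      = {(⟨v1, hv1lt⟩ : Fin N), ⟨v2, hv2lt⟩} := by
    ext b
    have hb := b.isLt
    rw [Finset.mem_filter]
    simp only [Finset.mem_filter, Finset.mem_univ, true_and, Finset.mem_insert,
      Finset.mem_singleton, Fin.ext_iff, nat_dist_def]
    rw [hv1, hv2]
    split <;> split <;> omega
  rw [hset]
  by_cases h : 2 * r < N
  · rw [if_pos h]
    rw [Finset.card_pair ?_]
    simp only [ne_eq, Fin.ext_iff, hv1, hv2]
    split <;> split <;> omega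
  · rw [if_neg h]
    have : (⟨v1, hv1lt⟩ : Fin N) = ⟨v2, hv2lt⟩ := by
      simp only [Fin.ext_iff, hv1, hv2]
      split <;> split <;> omega
    rw [this]
    simp

lemma torusDist_eq (N : ℕ) (hN : 0 < N) (a b : Fin N) :
    torusDist ((a : ℕ) / N : ℝ) ((b : ℕ) / N : ℝ)
      = ((min (Nat.dist a.val b.val) (N - Nat.dist a.val b.val) : ℕ) : ℝ) / N := by
  have hNR : (0 : ℝ) < N := by exact_mod_cast hN
  have hD : |((a : ℕ) : ℝ) / N - ((b : ℕ) : ℝ) / N| = (Nat.dist a.val b.val : ℝ) / N := by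
    rw [div_sub_div_same, abs_div, abs_of_pos hNR]
    congr 1
    rcases le_total a.val b.val with h | h
    · rw [Nat.dist_eq_sub_of_le h, abs_sub_comm, abs_of_nonneg (by
        simp only [sub_nonneg]; exact_mod_cast h)]
      push_cast [h]; ring
    · rw [Nat.dist_eq_sub_of_le_right h, abs_of_nonneg (by
        simp only [sub_nonneg]; exact_mod_cast h)]
      push_cast [h]; ring
  have hDle : Nat.dist a.val b.val ≤ N := by
    have := a.isLt; have := b.isLt
    rw [nat_dist_def]; omega
  rw [torusDist, hD]
  have h1 : (1 : ℝ) - (Nat.dist a.val b.val : ℝ) / N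
      = ((N - Nat.dist a.val b.val : ℕ) : ℝ) / N := by
    push_cast [hDle]
    field_simp
  rw [h1, Nat.cast_min, min_div_div_right (le_of_lt hNR)]

/-- Counting entries of the common distance vector of a Latin hypercube set
`X = {(σ_1(k)/N, …, σ_d(k)/N)}` with a single distance vector `(ρ_1,…,ρ_d)`:
for `1 ≤ r ≤ ⌊N/2⌋`, the number of indices `i` with `ρ_i = r/N` equals
`2d/(N−1)` if `r < N/2` and `d/(N−1)` if `r = N/2` (stated multiplied through
by `N−1`). -/
theorem latin_hypercube_single_distVec_count (N d : ℕ)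
    (σ : Fin d → Equiv.Perm (Fin N)) (ρ : Fin d → ℝ)
    (x : Fin N → Fin d → ℝ)
    (hx : ∀ k i, x k i = ((σ i k : ℕ) : ℝ) / N)
    (hsingle : ∀ k ℓ : Fin N, k ≠ ℓ →
      distVec (x k) (x ℓ) = Multiset.map ρ Finset.univ.val)
    (r : ℕ) (hr1 : 1 ≤ r) (hr2 : r ≤ N / 2) :
    (Finset.univ.filter (fun i : Fin d => ρ i = (r : ℝ) / N)).card * (N - 1)
      = if 2 * r < N then 2 * d else d := by
  have hN2 : 2 ≤ N := by omega
  have h2rN : 2 * r ≤ N := by omega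
  have hN : 0 < N := by omega
  have hNR : (0 : ℝ) < N := by exact_mod_cast hN
  set m := (Finset.univ.filter (fun i : Fin d => ρ i = (r : ℝ) / N)).card with hm
  set k0 : Fin N := ⟨0, hN⟩ with hk0
  -- count in the common distance multiset
  have hcount : ∀ ℓ : Fin N, ℓ ≠ k0 →
      (Finset.univ.filter (fun i : Fin d => torusDist (x k0 i) (x ℓ i) = (r : ℝ) / N)).card
        = m := by
    intro ℓ hℓ
    have h := hsingle k0 ℓ (Ne.symm hℓ)
    have hc : Multiset.count ((r : ℝ) / N) (distVec (x k0) (x ℓ))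
        = Multiset.count ((r : ℝ) / N) (Multiset.map ρ Finset.univ.val) := by rw [h]
    rw [distVec, Multiset.count_map, Multiset.count_map] at hc
    have h1 : (Finset.univ.filter
        (fun i : Fin d => torusDist (x k0 i) (x ℓ i) = (r : ℝ) / N)).card
        = Multiset.card (Multiset.filter
            (fun a : Fin d => (r : ℝ) / N = torusDist (x k0 a) (x ℓ a)) Finset.univ.val) := by
      rw [Finset.card, Finset.filter_val]
      congr 1
      apply Multiset.filter_congr
      intro i _
      exact ⟨fun hh => hh.symm, fun hh => hh.symm⟩
    have h2 : m = Multiset.card (Multiset.filter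
        (fun a : Fin d => (r : ℝ) / N = ρ a) Finset.univ.val) := by
      rw [hm, Finset.card, Finset.filter_val]
      congr 1
      apply Multiset.filter_congr
      intro i _
      exact ⟨fun hh => hh.symm, fun hh => hh.symm⟩
    rw [h1, h2]
    exact hc
  -- for each coordinate i, count of ℓ's
  have hinner : ∀ i : Fin d,
      (Finset.univ.filter (fun ℓ : Fin N => torusDist (x k0 i) (x ℓ i) = (r : ℝ) / N)).card
        = if 2 * r < N then 2 else 1 := by
    intro i
    rw [← card_dist_filter N r hr1 h2rN (σ i k0)]
    apply Finset.card_bij (fun ℓ _ => σ i ℓ)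
    · intro ℓ hℓ
      simp only [Finset.mem_filter, Finset.mem_univ, true_and] at hℓ ⊢
      rw [hx, hx, torusDist_eq N hN] at hℓ
      rw [div_eq_div_iff (ne_of_gt hNR) (ne_of_gt hNR)] at hℓ
      have := mul_right_cancel₀ (ne_of_gt hNR) hℓ
      exact_mod_cast this
    · intro ℓ1 _ ℓ2 _ hh
      exact (σ i).injective hh
    · intro b hb
      refine ⟨(σ i).symm b, ?_, by simp⟩
      simp only [Finset.mem_filter, Finset.mem_univ, true_and] at hb ⊢
      rw [hx, hx, torusDist_eq N hN]
      simp only [Equiv.apply_symm_apply]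
      rw [hb]
  -- double counting
  have hS : (Finset.univ.erase k0).card = N - 1 := by
    rw [Finset.card_erase_of_mem (Finset.mem_univ k0), Finset.card_univ, Fintype.card_fin]
  have hsum : ∑ ℓ ∈ Finset.univ.erase k0,
      (Finset.univ.filter (fun i : Fin d => torusDist (x k0 i) (x ℓ i) = (r : ℝ) / N)).card
      = (N - 1) * m := by
    rw [Finset.sum_congr rfl (fun ℓ hℓ => hcount ℓ (Finset.ne_of_mem_erase hℓ)),
      Finset.sum_const, hS, smul_eq_mul]
  have hswap : ∑ ℓ ∈ Finset.univ.erase k0,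
      (Finset.univ.filter (fun i : Fin d => torusDist (x k0 i) (x ℓ i) = (r : ℝ) / N)).card
      = ∑ i : Fin d, ((Finset.univ.erase k0).filter
          (fun ℓ : Fin N => torusDist (x k0 i) (x ℓ i) = (r : ℝ) / N)).card := by
    simp only [Finset.card_filter]
    rw [Finset.sum_comm]
  have hzero : ∀ i : Fin d, torusDist (x k0 i) (x k0 i) ≠ (r : ℝ) / N := by
    intro i
    rw [torusDist]
    simp only [sub_self, abs_zero, sub_zero]
    have : min (0:ℝ) 1 = 0 := by norm_num
    rw [this]
    intro hh
    have : (r : ℝ) = 0 := by field_simp at hh; linarith [hh]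
    have : r = 0 := by exact_mod_cast this
    omega
  have herase : ∀ i : Fin d,
      ((Finset.univ.erase k0).filter
        (fun ℓ : Fin N => torusDist (x k0 i) (x ℓ i) = (r : ℝ) / N)).card
      = (Finset.univ.filter
        (fun ℓ : Fin N => torusDist (x k0 i) (x ℓ i) = (r : ℝ) / N)).card := by
    intro i
    congr 1
    rw [Finset.filter_erase]
    apply Finset.erase_eq_of_notMem
    simp only [Finset.mem_filter]
    exact fun hh => hzero i hh.2
  have hfinal : (N - 1) * m = if 2 * r < N then 2 * d else 1 * d := by
    rw [← hsum, hswap]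
    rw [Finset.sum_congr rfl (fun i _ => by rw [herase i, hinner i])]
    rw [Finset.sum_const, Finset.card_univ, Fintype.card_fin, smul_eq_mul]
    split <;> ring
  rw [Nat.mul_comm]
  rw [hfinal]
  split <;> ring
end

section
/- Let X ⊆ 𝕋^d be a Latin hypercube set with N points having a single distance vector, and for 0 < p ≤ 6 let f_p(t) = 1 + (p/2)(1/6 − t + t²) for t ∈ [0,1), extended 1-periodically. Then X minimizes the tensor product energy E_{F_p} with potential f_p among all N-point configurations on 𝕋^d. -/
open Finset Real

/-- Tensor product energy of `N` points in `𝕋^d ≃ [0,1)^d`: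
`E_F(Y) = Σ_{k ≠ ℓ} ∏_i f(y_i^k − y_i^ℓ)`. -/
noncomputable def energyProd {N d : ℕ} (f : ℝ → ℝ) (y : Fin N → Fin d → ℝ) : ℝ :=
  ∑ k : Fin N, ∑ ℓ : Fin N, if k = ℓ then 0 else ∏ i : Fin d, f (y k i - y ℓ i)

/-- A configuration has a single distance vector if all pairs of distinct
points have the same distance vector. -/
def singleDistVec {N d : ℕ} (x : Fin N → Fin d → ℝ) : Prop :=
  ∀ k ℓ k' ℓ' : Fin N, k ≠ ℓ → k' ≠ ℓ' → distVec (x k) (x ℓ) = distVec (x k') (x ℓ')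

/-- The QMC potential `f_p(t) = 1 + (p/2)(1/6 − t + t²)` on `[0,1)`, extended
1-periodically to `ℝ` via the fractional part. -/
noncomputable def qmcPotential (p : ℝ) (t : ℝ) : ℝ :=
  1 + p / 2 * (1 / 6 - Int.fract t + (Int.fract t) ^ 2)

/-! ### Auxiliary definitions and lemmas -/

/-- The logarithm of the (positive) QMC potential, as a function of the
fractional part variable. -/
noncomputable def qmcH (p s : ℝ) : ℝ := Real.log (1 + p / 2 * (1 / 6 - s + s ^ 2))

section Potential

variable {p : ℝ}

lemma qmcQ_pos (hp0 : 0 < p) (hp6 : p ≤ 6) (s : ℝ) :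
    0 < 1 + p / 2 * (1 / 6 - s + s ^ 2) := by
  nlinarith [sq_nonneg (s - 1/2), mul_nonneg hp0.le (sq_nonneg (s - 1/2))]

lemma qmc_pos (hp0 : 0 < p) (hp6 : p ≤ 6) (t : ℝ) : 0 < qmcPotential p t :=
  qmcQ_pos hp0 hp6 (Int.fract t)

lemma qmc_eq_exp (hp0 : 0 < p) (hp6 : p ≤ 6) (t : ℝ) :
    qmcPotential p t = Real.exp (qmcH p (Int.fract t)) :=
  (Real.exp_log (qmc_pos hp0 hp6 t)).symm

lemma qmcH_hasDeriv (hp0 : 0 < p) (hp6 : p ≤ 6) (s : ℝ) :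
    HasDerivAt (qmcH p) (p / 2 * (2 * s - 1) / (1 + p / 2 * (1 / 6 - s + s ^ 2))) s := by
  have h0 : HasDerivAt (fun s : ℝ => s ^ 2) (2 * s) s := by
    simpa using hasDerivAt_pow 2 s
  have h1 : HasDerivAt (fun s : ℝ => 1 / 6 - s + s ^ 2) (-1 + 2 * s) s :=
    ((hasDerivAt_id s).const_sub (1/6 : ℝ)).add h0
  have h2 : HasDerivAt (fun s : ℝ => 1 + p / 2 * (1 / 6 - s + s ^ 2))
      (p / 2 * (2 * s - 1)) s := by
    have := (h1.const_mul (p/2)).const_add 1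
    exact this.congr_deriv (by ring)
  exact h2.log (qmcQ_pos hp0 hp6 s).ne'

lemma qmcH_deriv (hp0 : 0 < p) (hp6 : p ≤ 6) :
    deriv (qmcH p) = fun s => p / 2 * (2 * s - 1) / (1 + p / 2 * (1 / 6 - s + s ^ 2)) :=
  funext fun s => (qmcH_hasDeriv hp0 hp6 s).deriv

lemma qmcH_convex (hp0 : 0 < p) (hp6 : p ≤ 6) : ConvexOn ℝ (Set.Icc 0 1) (qmcH p) := by
  have hq : ∀ s : ℝ, 0 < 1 + p / 2 * (1 / 6 - s + s ^ 2) := qmcQ_pos hp0 hp6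
  have hnum : ∀ s : ℝ, HasDerivAt (fun s : ℝ => p / 2 * (2 * s - 1)) p s := by
    intro s
    have := ((hasDerivAt_id s).const_mul (2:ℝ)).sub_const 1
    have h2 := this.const_mul (p/2)
    exact h2.congr_deriv (by ring)
  have hden : ∀ s : ℝ, HasDerivAt (fun s : ℝ => 1 + p / 2 * (1 / 6 - s + s ^ 2))
      (p / 2 * (2 * s - 1)) s := by
    intro s
    have h0 : HasDerivAt (fun s : ℝ => s ^ 2) (2 * s) s := by
      simpa using hasDerivAt_pow 2 s
    have h1 : HasDerivAt (fun s : ℝ => 1 / 6 - s + s ^ 2) (-1 + 2 * s) s :=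
      ((hasDerivAt_id s).const_sub (1/6 : ℝ)).add h0
    have := (h1.const_mul (p/2)).const_add 1
    exact this.congr_deriv (by ring)
  have hder2 : ∀ s : ℝ, HasDerivAt (deriv (qmcH p))
      ((p * (1 + p / 2 * (1 / 6 - s + s ^ 2)) - (p / 2 * (2 * s - 1)) * (p / 2 * (2 * s - 1)))
        / (1 + p / 2 * (1 / 6 - s + s ^ 2)) ^ 2) s := by
    intro s
    rw [qmcH_deriv hp0 hp6]
    exact (hnum s).div (hden s) (hq s).ne'
  refine convexOn_of_deriv2_nonneg' (convex_Icc 0 1) ?_ ?_ ?_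
  · intro s _
    exact (qmcH_hasDeriv hp0 hp6 s).differentiableAt.differentiableWithinAt
  · intro s _
    exact (hder2 s).differentiableAt.differentiableWithinAt
  · intro s hs
    have h := (hder2 s).deriv
    simp only [Function.iterate_succ, Function.iterate_zero, Function.comp_apply, id_eq]
    rw [h]
    rcases hs with ⟨hs0, hs1⟩
    apply div_nonneg _ (sq_nonneg _)
    nlinarith [mul_nonneg (mul_nonneg hp0.le hs0) (sub_nonneg.2 hs1), sq_nonneg (2*s-1), hq s]

/-- On `[0,1)²`, the QMC log-potential of the difference only depends on the
geodesic torus distance. -/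
lemma qmcH_fract_eq (p : ℝ) {u v : ℝ} (hu : u ∈ Set.Ico (0:ℝ) 1) (hv : v ∈ Set.Ico (0:ℝ) 1) :
    qmcH p (Int.fract (u - v)) = qmcH p (torusDist u v) := by
  obtain ⟨hu0, hu1⟩ := hu
  obtain ⟨hv0, hv1⟩ := hv
  have hfr : Int.fract (u - v) = |u - v| ∨ Int.fract (u - v) = 1 - |u - v| := by
    rcases le_total v u with h | h
    · left
      rw [abs_of_nonneg (by linarith), Int.fract_eq_self.2 ⟨by linarith, by linarith⟩]
    · rcases eq_or_lt_of_le h with h' | h'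
      · left; subst h'; simp
      · right
        have h1 : Int.fract (u - v) = Int.fract (u - v + 1) := by
          have := Int.fract_add_intCast (u - v) 1
          simp only [Int.cast_one] at this
          rw [this]
        rw [h1, Int.fract_eq_self.2 ⟨by linarith, by linarith⟩, abs_of_neg (by linarith)]
        ring
  have hmin : torusDist u v = |u - v| ∨ torusDist u v = 1 - |u - v| := min_choice _ _
  unfold qmcH
  rcases hfr with h1 | h1 <;> rcases hmin with h2 | h2 <;> rw [h1, h2] <;> congr 1 <;> ring

end Potential

section Combinatorics

/-- Jensen's inequality in `card * f(average) ≤ sum` form. -/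
lemma jensen_card_mul_le {α : Type*} {t : Finset α} (ht : t.Nonempty) {H : ℝ → ℝ} {s : Set ℝ}
    (hH : ConvexOn ℝ s H) (a : α → ℝ) (ha : ∀ i ∈ t, a i ∈ s) :
    (t.card : ℝ) * H ((∑ i ∈ t, a i) / t.card) ≤ ∑ i ∈ t, H (a i) := by
  have hc : (0:ℝ) < t.card := by exact_mod_cast Finset.card_pos.2 ht
  have h := hH.map_sum_le (t := t) (w := fun _ => (t.card : ℝ)⁻¹)
    (p := a) (fun i _ => by positivity) (by
      rw [Finset.sum_const, nsmul_eq_mul, mul_inv_cancel₀ hc.ne'])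
    (fun i hi => ha i hi)
  have h1 : ∑ i ∈ t, (t.card : ℝ)⁻¹ • a i = (∑ i ∈ t, a i) / t.card := by
    rw [← Finset.smul_sum]; simp [div_eq_inv_mul]
  have h2 : ∑ i ∈ t, (t.card : ℝ)⁻¹ • H (a i) = (∑ i ∈ t, H (a i)) / t.card := by
    rw [← Finset.smul_sum]; simp [div_eq_inv_mul]
  rw [h1, h2] at h
  calc (t.card : ℝ) * H ((∑ i ∈ t, a i) / t.card)
      ≤ (t.card : ℝ) * ((∑ i ∈ t, H (a i)) / t.card) := mul_le_mul_of_nonneg_left h hc.le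
    _ = ∑ i ∈ t, H (a i) := by field_simp

variable {N : ℕ} [NeZero N]

/-- Reindexing of the sum over ordered pairs of distinct indices by the
cyclic shift between them. -/
lemma pair_reindex (g : Fin N → Fin N → ℝ) :
    ∑ k : Fin N, ∑ ℓ : Fin N, (if k = ℓ then 0 else g k ℓ)
      = ∑ m : Fin N, ∑ ℓ : Fin N, (if m = 0 then 0 else g (ℓ + m) ℓ) := by
  rw [Finset.sum_comm]
  have h1 : ∀ ℓ : Fin N, ∑ k : Fin N, (if k = ℓ then 0 else g k ℓ)
      = ∑ m : Fin N, (if m = 0 then 0 else g (ℓ + m) ℓ) := by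
    intro ℓ
    rw [← Equiv.sum_comp (Equiv.addLeft ℓ) (fun k => if k = ℓ then 0 else g k ℓ)]
    refine Finset.sum_congr rfl fun m _ => ?_
    simp [Equiv.addLeft, add_eq_left]
  rw [Finset.sum_congr rfl fun ℓ _ => h1 ℓ, Finset.sum_comm]

/-- The 1-dimensional Fejes Tóth type bound for monotone configurations:
the pair sums of a convex kernel are minimized by the equispaced grid. -/
lemma oneD_sorted {H : ℝ → ℝ}
    (hconv : ConvexOn ℝ (Set.Icc 0 1) H) (hsym : H 0 = H 1)
    {w : Fin N → ℝ} (hmono : Monotone w) (hw : ∀ k, w k ∈ Set.Ico (0:ℝ) 1) :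
    ∑ m : Fin N, (if m = 0 then 0 else (N:ℝ) * H (((m : ℕ) : ℝ) / N))
      ≤ ∑ k : Fin N, ∑ ℓ : Fin N, (if k = ℓ then 0 else H (Int.fract (w k - w ℓ))) := by
  have hN : 0 < N := Nat.pos_of_ne_zero (NeZero.ne N)
  haveI : Nonempty (Fin N) := Fin.pos_iff_nonempty.1 hN
  rw [pair_reindex]
  refine Finset.sum_le_sum fun m _ => ?_
  by_cases hm : m = 0
  · simp [hm]
  · simp only [if_neg hm]
    set a : Fin N → ℝ := fun ℓ =>
      w (ℓ + m) - w ℓ + (((ℓ : ℕ) : ℝ) + ((m : ℕ) : ℝ) - (((ℓ + m : Fin N) : ℕ) : ℝ)) / N with ha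
    have hkey : ∀ ℓ : Fin N, (a ℓ ∈ Set.Icc (0:ℝ) 1) ∧
        H (Int.fract (w (ℓ + m) - w ℓ)) = H (a ℓ) := by
      intro ℓ
      have hvadd : ((ℓ + m : Fin N) : ℕ) = ((ℓ : ℕ) + (m : ℕ)) % N := Fin.val_add ℓ m
      have hb0 := (hw ℓ).1; have hb1 := (hw ℓ).2
      have hc0 := (hw (ℓ + m)).1; have hc1 := (hw (ℓ + m)).2
      by_cases hlt : (ℓ : ℕ) + (m : ℕ) < N
      · have hv : ((ℓ + m : Fin N) : ℕ) = (ℓ : ℕ) + (m : ℕ) := by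
          rw [hvadd, Nat.mod_eq_of_lt hlt]
        have hle : ℓ ≤ ℓ + m := by rw [Fin.le_def, hv]; omega
        have hwle : w ℓ ≤ w (ℓ + m) := hmono hle
        have haeq : a ℓ = w (ℓ + m) - w ℓ := by
          rw [ha]; simp only; rw [hv]; push_cast; ring
        refine ⟨by rw [haeq]; exact ⟨by linarith, by linarith⟩, ?_⟩
        rw [haeq, Int.fract_eq_self.2 ⟨by linarith, by linarith⟩]
      · have hmodsub : ((ℓ : ℕ) + (m : ℕ)) % N = (ℓ : ℕ) + (m : ℕ) - N := by
          rw [Nat.mod_eq_sub_mod (by omega),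
            Nat.mod_eq_of_lt (by have := ℓ.isLt; have := m.isLt; omega)]
        have hv : ((ℓ + m : Fin N) : ℕ) + N = (ℓ : ℕ) + (m : ℕ) := by
          rw [hvadd, hmodsub]; omega
        have hℓlt : ((ℓ + m : Fin N) : ℕ) < (ℓ : ℕ) := by have := m.isLt; omega
        have hle : ℓ + m ≤ ℓ := by rw [Fin.le_def]; omega
        have hwle : w (ℓ + m) ≤ w ℓ := hmono hle
        have haeq : a ℓ = w (ℓ + m) - w ℓ + 1 := by
          rw [ha]; simp only
          have hcast : ((ℓ:ℕ):ℝ) + ((m:ℕ):ℝ) - (((ℓ+m : Fin N):ℕ):ℝ) = (N:ℝ) := by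
            have : (((((ℓ+m : Fin N):ℕ) + N : ℕ)):ℝ) = (((ℓ:ℕ) + (m:ℕ) : ℕ):ℝ) := by
              exact_mod_cast congrArg (fun n : ℕ => (n:ℝ)) hv
            push_cast at this; linarith
          rw [hcast, div_self (by exact_mod_cast hN.ne')]
        refine ⟨by rw [haeq]; exact ⟨by linarith, by linarith⟩, ?_⟩
        rcases eq_or_lt_of_le hwle with heq | hlt2
        · rw [haeq, ← heq]; simp [hsym]
        · have h1 : Int.fract (w (ℓ + m) - w ℓ) = w (ℓ + m) - w ℓ + 1 := by
            rw [show w (ℓ + m) - w ℓ = (w (ℓ + m) - w ℓ + 1) + ((-1 : ℤ) : ℝ) by push_cast; ring,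
               Int.fract_add_intCast, Int.fract_eq_self.2 ⟨by linarith, by linarith⟩]
            push_cast
            ring
          rw [h1, haeq]
    have h1 : ∑ ℓ : Fin N, w (ℓ + m) = ∑ ℓ, w ℓ := Equiv.sum_comp (Equiv.addRight m) w
    have h2 : ∑ ℓ : Fin N, (((ℓ + m : Fin N) : ℕ) : ℝ) = ∑ ℓ : Fin N, ((ℓ : ℕ) : ℝ) :=
      Equiv.sum_comp (Equiv.addRight m) (fun t : Fin N => ((t : ℕ) : ℝ))
    have hsuma : ∑ ℓ, a ℓ = ((m : ℕ) : ℝ) := by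
      rw [ha]
      rw [Finset.sum_add_distrib, Finset.sum_sub_distrib, h1, sub_self, zero_add,
        ← Finset.sum_div, Finset.sum_sub_distrib, Finset.sum_add_distrib, h2,
        Finset.sum_const, Finset.card_univ, Fintype.card_fin, nsmul_eq_mul]
      have hNne : (N:ℝ) ≠ 0 := by exact_mod_cast hN.ne'
      field_simp
      ring
    have hj := jensen_card_mul_le (Finset.univ_nonempty) hconv a (fun ℓ _ => (hkey ℓ).1)
    rw [hsuma] at hj
    simp only [Finset.card_univ, Fintype.card_fin] at hj
    calc (N:ℝ) * H (((m:ℕ):ℝ)/N) ≤ ∑ ℓ, H (a ℓ) := hj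
      _ = ∑ ℓ, H (Int.fract (w (ℓ + m) - w ℓ)) :=
          Finset.sum_congr rfl fun ℓ _ => ((hkey ℓ).2).symm

/-- The 1-dimensional Fejes Tóth type bound for arbitrary configurations. -/
lemma oneD {H : ℝ → ℝ}
    (hconv : ConvexOn ℝ (Set.Icc 0 1) H) (hsym : H 0 = H 1)
    {z : Fin N → ℝ} (hz : ∀ k, z k ∈ Set.Ico (0:ℝ) 1) :
    ∑ m : Fin N, (if m = 0 then 0 else (N:ℝ) * H (((m : ℕ) : ℝ) / N))
      ≤ ∑ k : Fin N, ∑ ℓ : Fin N, (if k = ℓ then 0 else H (Int.fract (z k - z ℓ))) := by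
  set sp := Tuple.sort z with hsp
  have hmono : Monotone (z ∘ sp) := Tuple.monotone_sort z
  have h := oneD_sorted hconv hsym hmono (fun k => hz _)
  refine h.trans_eq ?_
  have hout : ∀ k : Fin N, ∑ ℓ : Fin N,
        (if k = ℓ then 0 else H (Int.fract ((z ∘ sp) k - (z ∘ sp) ℓ)))
      = ∑ ℓ : Fin N, (if sp k = ℓ then 0 else H (Int.fract (z (sp k) - z ℓ))) := by
    intro k
    rw [← Equiv.sum_comp sp (fun ℓ => if sp k = ℓ then 0 else H (Int.fract (z (sp k) - z ℓ)))]
    refine Finset.sum_congr rfl fun ℓ _ => ?_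
    simp [Function.comp, EmbeddingLike.apply_eq_iff_eq]
  rw [Finset.sum_congr rfl fun k _ => hout k,
    ← Equiv.sum_comp sp (fun k => ∑ ℓ : Fin N, (if k = ℓ then 0 else H (Int.fract (z k - z ℓ))))]

/-- The exact value of pair sums for (a permutation of) the equispaced grid. -/
lemma grid_sum (H : ℝ → ℝ) (σ : Equiv.Perm (Fin N)) :
    ∑ k : Fin N, ∑ ℓ : Fin N,
        (if k = ℓ then 0 else H (Int.fract (((σ k : ℕ) : ℝ) / N - ((σ ℓ : ℕ) : ℝ) / N)))
      = ∑ m : Fin N, (if m = 0 then 0 else (N:ℝ) * H (((m : ℕ) : ℝ) / N)) := by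
  have hN : 0 < N := Nat.pos_of_ne_zero (NeZero.ne N)
  have hstep1 : ∑ k : Fin N, ∑ ℓ : Fin N,
        (if k = ℓ then 0 else H (Int.fract (((σ k : ℕ) : ℝ) / N - ((σ ℓ : ℕ) : ℝ) / N)))
      = ∑ a : Fin N, ∑ b : Fin N,
        (if a = b then 0 else H (Int.fract (((a : ℕ) : ℝ) / N - ((b : ℕ) : ℝ) / N))) := by
    have hin : ∀ k : Fin N, ∑ ℓ : Fin N,
        (if k = ℓ then 0 else H (Int.fract (((σ k : ℕ) : ℝ) / N - ((σ ℓ : ℕ) : ℝ) / N)))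
        = ∑ b : Fin N,
          (if σ k = b then 0 else H (Int.fract (((σ k : ℕ) : ℝ) / N - ((b : ℕ) : ℝ) / N))) := by
      intro k
      rw [← Equiv.sum_comp σ
        (fun b => if σ k = b then 0 else H (Int.fract (((σ k : ℕ) : ℝ) / N - ((b : ℕ) : ℝ) / N)))]
      exact Finset.sum_congr rfl fun ℓ _ => by simp [EmbeddingLike.apply_eq_iff_eq]
    rw [Finset.sum_congr rfl fun k _ => hin k,
      ← Equiv.sum_comp σ (fun a => ∑ b : Fin N,
        (if a = b then 0 else H (Int.fract (((a : ℕ) : ℝ) / N - ((b : ℕ) : ℝ) / N))))]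
  rw [hstep1, pair_reindex]
  refine Finset.sum_congr rfl fun m _ => ?_
  by_cases hm : m = 0
  · simp [hm]
  · simp only [if_neg hm]
    have hterm : ∀ b : Fin N,
        H (Int.fract ((((b + m : Fin N) : ℕ) : ℝ) / N - ((b : ℕ) : ℝ) / N))
          = H (((m : ℕ) : ℝ) / N) := by
      intro b
      congr 1
      have hvadd : ((b + m : Fin N) : ℕ) = ((b : ℕ) + (m : ℕ)) % N := Fin.val_add b m
      have hfr : (((m : ℕ) : ℝ) / N) = Int.fract (((m : ℕ) : ℝ) / N) := by
        rw [Int.fract_eq_self.2 ⟨by positivity, by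
          rw [div_lt_one (by exact_mod_cast hN)]
          exact_mod_cast m.isLt⟩]
      by_cases hlt : (b : ℕ) + (m : ℕ) < N
      · have hv : ((b + m : Fin N) : ℕ) = (b : ℕ) + (m : ℕ) := by
          rw [hvadd, Nat.mod_eq_of_lt hlt]
        rw [hv, hfr]
        congr 1
        push_cast
        ring
      · have hmodsub : ((b : ℕ) + (m : ℕ)) % N = (b : ℕ) + (m : ℕ) - N := by
          rw [Nat.mod_eq_sub_mod (by omega),
            Nat.mod_eq_of_lt (by have := b.isLt; have := m.isLt; omega)]
        have hv : ((b + m : Fin N) : ℕ) + N = (b : ℕ) + (m : ℕ) := by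
          rw [hvadd, hmodsub]; omega
        have hcast : (((b + m : Fin N) : ℕ) : ℝ) = ((b : ℕ) : ℝ) + ((m : ℕ) : ℝ) - N := by
          have : ((((b + m : Fin N) : ℕ) + N : ℕ) : ℝ) = (((b : ℕ) + (m : ℕ) : ℕ) : ℝ) :=
            congrArg _ hv
          push_cast at this; linarith
        rw [hcast, hfr]
        rw [show ((b:ℕ):ℝ) + ((m:ℕ):ℝ) - (N:ℝ)
            = (((b:ℕ):ℝ) + ((m:ℕ):ℝ)) + ((-1 : ℤ) : ℝ) * N by push_cast; ring]
        rw [show ((((b:ℕ):ℝ) + ((m:ℕ):ℝ)) + ((-1 : ℤ) : ℝ) * N) / N - ((b:ℕ):ℝ)/N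
            = ((m:ℕ):ℝ)/N + ((-1 : ℤ) : ℝ) by field_simp; ring]
        exact Int.fract_add_intCast _ _
    rw [Finset.sum_congr rfl fun b _ => hterm b, Finset.sum_const, Finset.card_univ,
      Fintype.card_fin, nsmul_eq_mul]

omit [NeZero N] in
/-- Rewriting the double `if`-sum as a sum over the off-diagonal. -/
lemma sum_ite_offDiag (g : Fin N → Fin N → ℝ) :
    ∑ k : Fin N, ∑ ℓ : Fin N, (if k = ℓ then 0 else g k ℓ)
      = ∑ q ∈ (Finset.univ : Finset (Fin N)).offDiag, g q.1 q.2 := by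
  rw [← Finset.sum_product']
  rw [show (Finset.univ : Finset (Fin N)).offDiag
      = (Finset.univ ×ˢ Finset.univ).filter (fun q : Fin N × Fin N => q.1 ≠ q.2) from by
    ext q; simp [Finset.mem_offDiag]]
  rw [Finset.sum_filter]
  exact Finset.sum_congr rfl fun q _ => by by_cases h : q.1 = q.2 <;> simp [h]

end Combinatorics

/-- An `N`-point Latin hypercube set with a single distance vector minimizes
the tensor product energy with the QMC potential `f_p` for all `0 < p ≤ 6`. -/
theorem latin_hypercube_single_distVec_minimizes_qmc (N d : ℕ) (p : ℝ)
    (hp0 : 0 < p) (hp6 : p ≤ 6)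
    (σ : Fin d → Equiv.Perm (Fin N))
    (x : Fin N → Fin d → ℝ)
    (hx : ∀ k i, x k i = ((σ i k : ℕ) : ℝ) / N)
    (hsingle : singleDistVec x) :
    ∀ y : Fin N → Fin d → ℝ, (∀ k i, y k i ∈ Set.Ico (0 : ℝ) 1) →
      energyProd (qmcPotential p) y ≥ energyProd (qmcPotential p) x := by
  intro y hy
  by_cases hN2 : N < 2
  · have hzero : ∀ z : Fin N → Fin d → ℝ, energyProd (qmcPotential p) z = 0 := by
      intro z
      refine Finset.sum_eq_zero fun k _ => Finset.sum_eq_zero fun ℓ _ => ?_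
      have hkl : k = ℓ := by
        have h1 := k.isLt; have h2 := ℓ.isLt
        ext
        omega
      simp [hkl]
    rw [hzero y, hzero x]
  · push_neg at hN2
    haveI : NeZero N := ⟨by omega⟩
    have hN : 0 < N := by omega
    set H := qmcH p with hHdef
    have hconv : ConvexOn ℝ (Set.Icc 0 1) H := qmcH_convex hp0 hp6
    have hsym : H 0 = H 1 := by
      rw [hHdef]
      unfold qmcH
      norm_num
    have hxI : ∀ k i, x k i ∈ Set.Ico (0:ℝ) 1 := by
      intro k i
      rw [hx]
      constructor
      · positivity
      · rw [div_lt_one (by exact_mod_cast hN)]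
        exact_mod_cast (σ i k).isLt
    set OD := (Finset.univ : Finset (Fin N)).offDiag with hOD
    set Sz := fun (z : Fin N → Fin d → ℝ) (q : Fin N × Fin N) =>
      ∑ i : Fin d, H (Int.fract (z q.1 i - z q.2 i)) with hSzdef
    have hE : ∀ z : Fin N → Fin d → ℝ,
        energyProd (qmcPotential p) z = ∑ q ∈ OD, Real.exp (Sz z q) := by
      intro z
      unfold energyProd
      rw [sum_ite_offDiag (fun k ℓ => ∏ i : Fin d, qmcPotential p (z k i - z ℓ i))]
      refine Finset.sum_congr rfl fun q _ => ?_
      rw [hSzdef]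
      simp only
      rw [Real.exp_sum]
      exact Finset.prod_congr rfl fun i _ => qmc_eq_exp hp0 hp6 _
    have hq0mem : ((⟨0, by omega⟩, ⟨1, by omega⟩) : Fin N × Fin N) ∈ OD := by
      rw [hOD]
      simp [Finset.mem_offDiag, Fin.ext_iff]
    set q0 : Fin N × Fin N := (⟨0, by omega⟩, ⟨1, by omega⟩) with hq0def
    have hconstS : ∀ q ∈ OD, Sz x q = Sz x q0 := by
      intro q hq
      have hne : q.1 ≠ q.2 := by
        rw [hOD] at hq
        exact (Finset.mem_offDiag.1 hq).2.2
      have hne0 : q0.1 ≠ q0.2 := by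
        rw [hq0def]
        simp [Fin.ext_iff]
      have key : ∀ k ℓ : Fin N, Sz x (k, ℓ) = ((distVec (x k) (x ℓ)).map H).sum := by
        intro k ℓ
        rw [hSzdef]
        simp only
        unfold distVec
        rw [Multiset.map_map]
        exact Finset.sum_congr rfl fun i _ => qmcH_fract_eq p (hxI k i) (hxI ℓ i)
      have hq1 : Sz x q = Sz x (q.1, q.2) := by rw [Prod.mk.eta]
      have hq2 : Sz x q0 = Sz x (q0.1, q0.2) := by rw [Prod.mk.eta]
      rw [hq1, hq2, key q.1 q.2, key q0.1 q0.2,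
        hsingle q.1 q.2 q0.1 q0.2 hne hne0]
    have hTle : ∑ q ∈ OD, Sz x q ≤ ∑ q ∈ OD, Sz y q := by
      have hform : ∀ z : Fin N → Fin d → ℝ, ∑ q ∈ OD, Sz z q
          = ∑ i : Fin d, ∑ k : Fin N, ∑ ℓ : Fin N,
              (if k = ℓ then 0 else H (Int.fract (z k i - z ℓ i))) := by
        intro z
        rw [hSzdef]
        simp only
        rw [Finset.sum_comm]
        refine Finset.sum_congr rfl fun i _ => ?_
        rw [sum_ite_offDiag (fun k ℓ => H (Int.fract (z k i - z ℓ i)))]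
      rw [hform x, hform y]
      refine Finset.sum_le_sum fun i _ => ?_
      have hgrid : ∑ k : Fin N, ∑ ℓ : Fin N,
            (if k = ℓ then 0 else H (Int.fract (x k i - x ℓ i)))
          = ∑ m : Fin N, (if m = 0 then 0 else (N:ℝ) * H (((m:ℕ):ℝ)/N)) := by
        simp only [hx]
        exact grid_sum H (σ i)
      rw [hgrid]
      exact oneD hconv hsym (fun k => hy k i)
    have hcard : (0:ℝ) < OD.card := by
      exact_mod_cast Finset.card_pos.2 ⟨q0, hq0mem⟩
    have hEx : energyProd (qmcPotential p) x = OD.card * Real.exp (Sz x q0) := by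
      rw [hE x, Finset.sum_congr rfl fun q hq => by rw [hconstS q hq],
        Finset.sum_const, nsmul_eq_mul]
    have hTx : ∑ q ∈ OD, Sz x q = OD.card * Sz x q0 := by
      rw [Finset.sum_congr rfl hconstS, Finset.sum_const, nsmul_eq_mul]
    have hEy : (OD.card : ℝ) * Real.exp ((∑ q ∈ OD, Sz y q)/OD.card)
        ≤ energyProd (qmcPotential p) y := by
      rw [hE y]
      exact jensen_card_mul_le ⟨q0, hq0mem⟩ convexOn_exp (Sz y) (fun q _ => Set.mem_univ _)
    have hmid : Real.exp (Sz x q0) ≤ Real.exp ((∑ q ∈ OD, Sz y q)/OD.card) := by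
      rw [Real.exp_le_exp, le_div_iff₀ hcard]
      calc Sz x q0 * OD.card = ∑ q ∈ OD, Sz x q := by rw [hTx]; ring
        _ ≤ ∑ q ∈ OD, Sz y q := hTle
    calc energyProd (qmcPotential p) y
        ≥ (OD.card : ℝ) * Real.exp ((∑ q ∈ OD, Sz y q)/OD.card) := hEy
      _ ≥ OD.card * Real.exp (Sz x q0) := mul_le_mul_of_nonneg_left hmid hcard.le
      _ = energyProd (qmcPotential p) x := hEx.symm
end

section
/- Let Λ ⊆ 𝕋^d be an N-point integration lattice with N ≥ 3. Then Λ has a single distance vector if and only if N is prime and, up to torus symmetries (permuting coordinates and replacing coordinates x by 1−x), the generating vector of Λ equals (1/N,…,1/N, 2/N,…,2/N, …, n/N,…,n/N), where N = 2n+1, each value j/N (j = 1,…,n) is repeated m times, and d = mn. Conversely, for every prime N = 2n+1 and every m ≥ 1, the lattice in 𝕋^{mn} with this generating vector has a single distance vector. -/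
open Finset Real

lemma torusDist_fract (u v : ℝ) :
    torusDist (Int.fract u) (Int.fract v)
      = min (Int.fract (u - v)) (1 - Int.fract (u - v)) := by
  have hu0 := Int.fract_nonneg u; have hu1 := Int.fract_lt_one u
  have hv0 := Int.fract_nonneg v; have hv1 := Int.fract_lt_one v
  have key : Int.fract (u - v) = Int.fract (Int.fract u - Int.fract v) := by
    rw [show u - v = (Int.fract u - Int.fract v) + ((⌊u⌋ - ⌊v⌋ : ℤ) : ℝ) by
      rw [Int.fract, Int.fract]; push_cast; ring]
    exact Int.fract_add_intCast _ _
  rcases le_total (Int.fract v) (Int.fract u) with hle | hle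
  · have h1 : Int.fract (Int.fract u - Int.fract v) = Int.fract u - Int.fract v :=
      Int.fract_eq_self.mpr ⟨by linarith, by linarith⟩
    rw [key, h1]
    unfold torusDist
    rw [abs_of_nonneg (by linarith)]
  · rcases eq_or_lt_of_le hle with heq | hlt
    · rw [key, heq]
      simp [torusDist]
    · have h1 : Int.fract (Int.fract u - Int.fract v) = Int.fract u - Int.fract v + 1 := by
        rw [← Int.fract_add_one, Int.fract_eq_self.mpr ⟨by linarith, by linarith⟩]
      rw [key, h1]
      unfold torusDist
      rw [abs_of_neg (by linarith), min_comm]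
      ring_nf

/-- the "folded" value `min v (N - v)` of `a : ZMod N`. -/
def dm (N : ℕ) (a : ZMod N) : ℕ := min (ZMod.val a) (N - ZMod.val a)

lemma dm_neg {N : ℕ} [NeZero N] (a : ZMod N) : dm N (-a) = dm N a := by
  rcases eq_or_ne a 0 with rfl | ha
  · simp
  · haveI : NeZero a := ⟨ha⟩
    have h1 : (-a).val = N - a.val := ZMod.val_neg_of_ne_zero a
    have h2 := ZMod.val_lt a
    unfold dm
    rw [h1]
    omega

lemma dm_eq_iff {N : ℕ} [NeZero N] (a b : ZMod N) :
    dm N a = dm N b ↔ a = b ∨ a = -b := by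
  constructor
  · intro hd
    have hva := ZMod.val_lt a
    have hvb := ZMod.val_lt b
    unfold dm at hd
    have : a.val = b.val ∨ a.val + b.val = N := by omega
    rcases this with h | h
    · exact Or.inl (ZMod.val_injective N h)
    · have hb : b ≠ 0 := by
        intro h0; rw [h0, ZMod.val_zero] at h; omega
      haveI : NeZero b := ⟨hb⟩
      have : (-b).val = N - b.val := ZMod.val_neg_of_ne_zero b
      exact Or.inr (ZMod.val_injective N (by omega))
  · rintro (rfl | rfl)
    · rfl
    · exact dm_neg b

lemma dm_eq_zero_iff {N : ℕ} [NeZero N] (a : ZMod N) : dm N a = 0 ↔ a = 0 := by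
  have hva := ZMod.val_lt a
  unfold dm
  rw [← ZMod.val_eq_zero]
  omega

lemma torus_coord {N : ℕ} [NeZero N] (a b : ℕ) :
    torusDist (Int.fract ((a : ℝ) / N)) (Int.fract ((b : ℝ) / N))
      = (dm N ((a : ZMod N) - (b : ZMod N)) : ℝ) / N := by
  have hN : (0 : ℝ) < N := by exact_mod_cast Nat.pos_of_ne_zero (NeZero.ne N)
  rw [torusDist_fract]
  have h1 : (a : ℝ) / N - (b : ℝ) / N = (((a : ℤ) - (b : ℤ) : ℤ) : ℝ) / N := by
    push_cast; ring
  rw [h1, Int.fract_div_intCast_eq_div_intCast_mod]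
  set w : ZMod N := (a : ZMod N) - (b : ZMod N) with hw
  have h2 : (((a : ℤ) - (b : ℤ)) % N : ℤ) = (w.val : ℤ) := by
    rw [hw]
    have := ZMod.val_intCast (n := N) ((a : ℤ) - (b : ℤ))
    rw [← this]
    push_cast
    norm_cast
  rw [h2]
  have hv := ZMod.val_lt w
  unfold dm
  push_cast [Nat.cast_min, Nat.cast_sub hv.le]
  rw [← min_div_div_right hN.le]
  congr 1
  field_simp

/-- Classification of integration lattices with a single distance vector: an
`N`-point integration lattice in `𝕋^d` (`N ≥ 3`) with generating vector
`(h_1/N,…,h_d/N)`, `gcd(h_i,N) = 1`, has a single distance vector if and only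
if `N` is prime and, up to torus symmetries (permuting coordinates and
replacing `x` by `1−x`, i.e. `h_i` by `N−h_i`), the generating vector equals
`(1/N,…,1/N, 2/N,…,2/N, …, n/N,…,n/N)` with `N = 2n+1`, each value repeated
`m` times, and `d = mn`; equivalently, for each `j = 1,…,n` exactly `m`
coordinates satisfy `h_i ≡ ±j (mod N)`. -/
theorem lattice_single_distVec_iff (N d : ℕ) (hN : 3 ≤ N) (hd : 1 ≤ d)
    (h : Fin d → ℕ) (hcop : ∀ i, Nat.Coprime (h i) N)
    (x : Fin N → Fin d → ℝ)
    (hx : ∀ k i, x k i = Int.fract ((h i : ℝ) * ((k : ℕ) : ℝ) / N)) :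
    singleDistVec x ↔
      Nat.Prime N ∧ ∃ n m : ℕ, N = 2 * n + 1 ∧ d = m * n ∧
        ∀ j : ℕ, 1 ≤ j → j ≤ n →
          (Finset.univ.filter
            (fun i : Fin d => h i % N = j ∨ h i % N = N - j)).card = m := by
  haveI : NeZero N := ⟨by omega⟩
  haveI : Fact (1 < N) := ⟨by omega⟩
  set c : Fin d → ZMod N := fun i => (h i : ZMod N) with hc
  set κ : Fin N → ZMod N := fun k => ((k : ℕ) : ZMod N) with hκ
  -- coprime: c i ≠ 0
  have hc0 : ∀ i, c i ≠ 0 := by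
    intro i h0
    rw [hc] at h0
    have hdvd := (ZMod.natCast_eq_zero_iff _ _).mp h0
    have h1 : N ∣ Nat.gcd (h i) N := Nat.dvd_gcd hdvd (dvd_refl N)
    rw [(hcop i)] at h1
    have := Nat.le_of_dvd one_pos h1
    omega
  -- the key multiset
  set M : ZMod N → Multiset ℕ := fun t => Multiset.map (fun i => dm N (c i * t)) Finset.univ.val
    with hM
  have hdist : ∀ k ℓ, distVec (x k) (x ℓ)
      = Multiset.map (fun j : ℕ => (j : ℝ) / N) (M (κ k - κ ℓ)) := by
    intro k ℓ
    rw [hM]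
    simp only [distVec, Multiset.map_map]
    refine Multiset.map_congr rfl ?_
    intro i _
    simp only [Function.comp_apply]
    rw [hx, hx]
    have e1 : (h i : ℝ) * ((k : ℕ) : ℝ) / N = ((h i * (k : ℕ) : ℕ) : ℝ) / N := by push_cast; ring
    have e2 : (h i : ℝ) * ((ℓ : ℕ) : ℝ) / N = ((h i * (ℓ : ℕ) : ℕ) : ℝ) / N := by push_cast; ring
    rw [e1, e2, torus_coord]
    congr 2
    rw [hc, hκ]
    push_cast
    ring
  have hκinj : Function.Injective κ := by
    intro k l hkl
    simp only [hκ] at hkl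
    have : ((k : ℕ) : ZMod N).val = ((l : ℕ) : ZMod N).val := by rw [hkl]
    rw [ZMod.val_cast_of_lt k.isLt, ZMod.val_cast_of_lt l.isLt] at this
    exact Fin.ext this
  have hinj : Function.Injective (fun j : ℕ => (j : ℝ) / N) := by
    intro a b hab
    have hN0 : (N : ℝ) ≠ 0 := by positivity
    field_simp at hab
    exact_mod_cast hab
  have hred : singleDistVec x ↔ ∀ t t' : ZMod N, t ≠ 0 → t' ≠ 0 → M t = M t' := by
    constructor
    · intro hs t t' ht ht'
      have hval : ∀ s : ZMod N, s ≠ 0 → ∃ k l : Fin N, k ≠ l ∧ κ k - κ l = s := by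
        intro s hs0
        refine ⟨⟨s.val, ZMod.val_lt s⟩, ⟨0, by omega⟩, ?_, ?_⟩
        · intro he
          have : s.val = 0 := by simpa using congrArg Fin.val he
          exact hs0 (by rwa [ZMod.val_eq_zero] at this)
        · rw [hκ]
          simp [ZMod.natCast_val, ZMod.cast_id]
      obtain ⟨k, l, hkl, hkls⟩ := hval t ht
      obtain ⟨k', l', hkl', hkls'⟩ := hval t' ht'
      have := hs k l k' l' hkl hkl'
      rw [hdist, hdist, hkls, hkls'] at this
      exact Multiset.map_injective hinj this
    · intro hMM k ℓ k' ℓ' hkl hkl'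
      rw [hdist, hdist]
      congr 1
      exact hMM _ _ (sub_ne_zero_of_ne fun e => hkl (hκinj e))
        (sub_ne_zero_of_ne fun e => hkl' (hκinj e))
  rw [hred]
  -- count lemma
  have hcount : ∀ (t : ZMod N) (v : ℕ), Multiset.count v (M t)
      = (Finset.univ.filter (fun i => dm N (c i * t) = v)).card := by
    intro t v
    rw [hM]
    rw [Multiset.count_map]
    rw [Finset.card_filter, Finset.sum_boole]
    simp only [eq_comm]
    rfl
  -- predicate equivalence with the statement's filter
  have hpred : ∀ n : ℕ, N = 2 * n + 1 → ∀ j : ℕ, 1 ≤ j → j ≤ n → ∀ i : Fin d,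
      ((h i % N = j ∨ h i % N = N - j) ↔ dm N (c i) = j) := by
    intro n hn j hj1 hjn i
    have hv : (c i).val = h i % N := by rw [hc]; exact ZMod.val_natCast N _
    have hvlt : h i % N < N := Nat.mod_lt _ (by omega)
    unfold dm
    rw [hv]
    omega
  -- range of dm on nonzero elements
  have hrange : ∀ n : ℕ, N = 2 * n + 1 → ∀ u : ZMod N, u ≠ 0 →
      1 ≤ dm N u ∧ dm N u ≤ n := by
    intro n hn u hu
    have h1 : dm N u ≠ 0 := fun h0 => hu ((dm_eq_zero_iff u).mp h0)
    have h2 := ZMod.val_lt u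
    unfold dm at *
    omega
  -- key transfer: counting values of M t
  have key : ∀ (hp : N.Prime) (n : ℕ), N = 2 * n + 1 → ∀ t : ZMod N, t ≠ 0 →
      ∀ j : ℕ, 1 ≤ j → j ≤ n →
      Multiset.count j (M t)
        = (Finset.univ.filter
            (fun i => dm N (c i) = dm N ((j : ZMod N) * t⁻¹))).card := by
    intro hp n hn t ht j hj1 hjn
    haveI := Fact.mk hp
    rw [hcount]
    congr 1
    apply Finset.filter_congr
    intro i _
    have hjlt : j < N := by omega
    have hjv : ((j : ZMod N)).val = j := ZMod.val_cast_of_lt hjlt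
    have hdmj : dm N (j : ZMod N) = j := by unfold dm; rw [hjv]; omega
    have A : c i = (j : ZMod N) * t⁻¹ ↔ c i * t = (j : ZMod N) := eq_mul_inv_iff_mul_eq₀ ht
    have B : c i = -((j : ZMod N) * t⁻¹) ↔ c i * t = -(j : ZMod N) := by
      rw [← neg_mul]; exact eq_mul_inv_iff_mul_eq₀ ht
    calc dm N (c i * t) = j ↔ dm N (c i * t) = dm N ((j : ZMod N)) := by rw [hdmj]
      _ ↔ (c i * t = (j : ZMod N) ∨ c i * t = -(j : ZMod N)) := dm_eq_iff _ _
      _ ↔ (c i = (j : ZMod N) * t⁻¹ ∨ c i = -((j : ZMod N) * t⁻¹)) := or_congr A.symm B.symm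
      _ ↔ dm N (c i) = dm N ((j : ZMod N) * t⁻¹) := (dm_eq_iff _ _).symm
  -- counts vanish outside [1, n]
  have hzero : ∀ (hp : N.Prime) (n : ℕ), N = 2 * n + 1 → ∀ t : ZMod N, t ≠ 0 →
      ∀ v : ℕ, (v = 0 ∨ n < v) → Multiset.count v (M t) = 0 := by
    intro hp n hn t ht v hv
    haveI := Fact.mk hp
    rw [Multiset.count_eq_zero]
    intro hmem
    rw [hM] at hmem
    obtain ⟨i, -, hi⟩ := Multiset.mem_map.mp hmem
    have hne : c i * t ≠ 0 := mul_ne_zero (hc0 i) ht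
    obtain ⟨r1, r2⟩ := hrange n hn (c i * t) hne
    omega
  have hjZne : ∀ n : ℕ, N = 2 * n + 1 → ∀ j : ℕ, 1 ≤ j → j ≤ n → (j : ZMod N) ≠ 0 := by
    intro n hn j hj1 hjn h0
    have hdvd := (ZMod.natCast_eq_zero_iff _ _).mp h0
    have := Nat.le_of_dvd (by omega) hdvd
    omega
  have hdm1 : dm N (1 : ZMod N) = 1 := by
    unfold dm; rw [ZMod.val_one]; omega
  constructor
  · intro hMM
    -- N is prime
    have hprime : N.Prime := by
      by_contra hp
      obtain ⟨q, hqd, hq2, hqN⟩ := Nat.exists_dvd_of_not_prime2 (by omega) hp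
      obtain ⟨s, hs⟩ := hqd
      have hs0 : s ≠ 0 := by rintro rfl; simp at hs; omega
      have hs1 : s ≠ 1 := by rintro rfl; simp at hs; omega
      have hs2 : 2 ≤ s := by omega
      have hsN : s < N := by nlinarith
      have hsdN : s ∣ N := ⟨q, by rw [hs]; ring⟩
      set t : ZMod N := (s : ZMod N) with htdef
      have ht : t ≠ 0 := by
        intro h0
        have hdvd := (ZMod.natCast_eq_zero_iff _ _).mp h0
        have := Nat.le_of_dvd (by omega) hdvd
        omega
      set i0 : Fin d := ⟨0, hd⟩ with hi0
      have hmem : dm N (c i0 * t) ∈ M t := by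
        rw [hM]
        exact Multiset.mem_map_of_mem _ (Finset.mem_val.mpr (Finset.mem_univ i0))
      rw [hMM t 1 ht one_ne_zero, hM] at hmem
      obtain ⟨i1, -, hi1⟩ := Multiset.mem_map.mp hmem
      have hsv : s ∣ (c i0 * t).val := by
        have e : c i0 * t = ((h i0 * s : ℕ) : ZMod N) := by rw [hc, htdef]; push_cast; ring
        rw [e, ZMod.val_natCast]
        exact (Nat.dvd_mod_iff hsdN).mpr ⟨h i0, mul_comm _ _⟩
      have hsdm : s ∣ dm N (c i0 * t) := by
        have hd2 : s ∣ N - (c i0 * t).val := Nat.dvd_sub hsdN hsv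
        unfold dm
        rcases le_total ((c i0 * t).val) (N - (c i0 * t).val) with hle | hle
        · rw [min_eq_left hle]; exact hsv
        · rw [min_eq_right hle]; exact hd2
      rw [← hi1, mul_one] at hsdm
      have hvlt := ZMod.val_lt (c i1)
      have hsv1 : s ∣ (c i1).val := by
        have hd2 : s ∣ N - (c i1).val → s ∣ (c i1).val := by
          intro hdd
          have := Nat.dvd_sub hsdN hdd
          rwa [Nat.sub_sub_self hvlt.le] at this
        unfold dm at hsdm
        rcases le_total ((c i1).val) (N - (c i1).val) with hle | hle
        · rwa [min_eq_left hle] at hsdm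
        · rw [min_eq_right hle] at hsdm; exact hd2 hsdm
      rw [hc] at hsv1
      rw [ZMod.val_natCast] at hsv1
      have hdh : s ∣ h i1 := (Nat.dvd_mod_iff hsdN).mp hsv1
      have hgcd : s ∣ Nat.gcd (h i1) N := Nat.dvd_gcd hdh hsdN
      rw [hcop i1] at hgcd
      have := Nat.le_of_dvd one_pos hgcd
      omega
    haveI := Fact.mk hprime
    have hodd : N % 2 = 1 := Nat.odd_iff.mp (hprime.odd_of_ne_two (by omega))
    set n := N / 2 with hndef
    have hn : N = 2 * n + 1 := by omega
    -- all fibers have the same size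
    have hall : ∀ j : ℕ, 1 ≤ j → j ≤ n →
        (Finset.univ.filter (fun i => dm N (c i) = j)).card
          = (Finset.univ.filter (fun i => dm N (c i) = 1)).card := by
      intro j hj1 hjn
      have hj0 : (j : ZMod N) ≠ 0 := hjZne n hn j hj1 hjn
      have hjlt : j < N := by omega
      have hjv : ((j : ZMod N)).val = j := ZMod.val_cast_of_lt hjlt
      have hdmj : dm N (j : ZMod N) = j := by unfold dm; rw [hjv]; omega
      have e1 := key hprime n hn 1 one_ne_zero j hj1 hjn
      rw [inv_one, mul_one, hdmj] at e1
      have e2 := key hprime n hn (j : ZMod N) hj0 j hj1 hjn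
      rw [mul_inv_cancel₀ hj0, hdm1, hMM (j : ZMod N) 1 hj0 one_ne_zero] at e2
      rw [← e1, e2]
    refine ⟨hprime, n, (Finset.univ.filter (fun i => dm N (c i) = 1)).card, hn, ?_, ?_⟩
    · -- d = m * n
      have hfib : ∀ i : Fin d, dm N (c i) ∈ Finset.Icc 1 n := by
        intro i
        rw [Finset.mem_Icc]
        exact hrange n hn (c i) (hc0 i)
      have hsum := Finset.card_eq_sum_card_fiberwise
        (f := fun i => dm N (c i)) (s := Finset.univ) (t := Finset.Icc 1 n) (fun i _ => hfib i)
      rw [Finset.card_univ, Fintype.card_fin] at hsum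
      calc d = ∑ b ∈ Finset.Icc 1 n, (Finset.univ.filter (fun a => dm N (c a) = b)).card :=
            hsum
        _ = ∑ _b ∈ Finset.Icc 1 n,
              (Finset.univ.filter (fun i => dm N (c i) = 1)).card :=
            Finset.sum_congr rfl (fun j hj => by
              rw [Finset.mem_Icc] at hj
              exact hall j hj.1 hj.2)
        _ = (Finset.univ.filter (fun i => dm N (c i) = 1)).card * n := by
            rw [Finset.sum_const, Nat.card_Icc]
            simp [mul_comm]
    · intro j hj1 hjn
      rw [Finset.filter_congr (fun i _ => hpred n hn j hj1 hjn i)]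
      exact hall j hj1 hjn
  · rintro ⟨hprime, n, m, hn, hdmn, hcard⟩
    haveI := Fact.mk hprime
    have hfibm : ∀ j : ℕ, 1 ≤ j → j ≤ n →
        (Finset.univ.filter (fun i => dm N (c i) = j)).card = m := by
      intro j hj1 hjn
      rw [← hcard j hj1 hjn]
      exact congrArg Finset.card (Finset.filter_congr (fun i _ =>
        (hpred n hn j hj1 hjn i).symm))
    intro t t' ht ht'
    refine Multiset.ext.mpr (fun v => ?_)
    rcases le_or_gt v n with hvn | hvn
    · rcases Nat.eq_zero_or_pos v with rfl | hv1
      · rw [hzero hprime n hn t ht 0 (Or.inl rfl), hzero hprime n hn t' ht' 0 (Or.inl rfl)]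
      · have hu : ∀ s : ZMod N, s ≠ 0 → Multiset.count v (M s) = m := by
          intro s hs
          rw [key hprime n hn s hs v hv1 hvn]
          have hv0 : (v : ZMod N) ≠ 0 := hjZne n hn v hv1 hvn
          have hune : (v : ZMod N) * s⁻¹ ≠ 0 := mul_ne_zero hv0 (inv_ne_zero hs)
          obtain ⟨r1, r2⟩ := hrange n hn _ hune
          exact hfibm _ r1 r2
        rw [hu t ht, hu t' ht']
    · rw [hzero hprime n hn t ht v (Or.inr hvn), hzero hprime n hn t' ht' v (Or.inr hvn)]
end
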